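/- The Brown graph B(q) for an odd prime power q is q-vertex-connected. -/

import Mathlib

/-- `G` contains no cycle of length 4 as a (not necessarily induced) subgraph. -/
def C4Free {V : Type*} (G : SimpleGraph V) : Prop :=
  ¬ ∃ a b c d : V, a ≠ b ∧ a ≠ c ∧ a ≠ d ∧ b ≠ c ∧ b ≠ d ∧ c ≠ d ∧
    G.Adj a b ∧ G.Adj b c ∧ G.Adj c d ∧ G.Adj d a

/-- `G` has edge-connectivity at least `k`: it stays connected after
deleting any set of fewer than `k` edges. -/
def EdgeConnAtLeast {V : Type*} (G : SimpleGraph V) (k : ℕ) : Prop :=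
  ∀ s : Finset (Sym2 V), s.card < k → (G.deleteEdges ↑s).Connected

/-- The Brown graph on the projective plane over `F`: vertices are classes of
nonzero vectors of `F³`, adjacency is orthogonality of representatives. -/
def brown (F : Type*) [Field F] : SimpleGraph (Projectivization F (Fin 3 → F)) where
  Adj x y := x ≠ y ∧ ∑ i, x.rep i * y.rep i = 0
  symm := ⟨fun x y h => ⟨h.1.symm, by
    rw [← h.2]; exact Finset.sum_congr rfl fun i _ => mul_comm _ _⟩⟩
  loopless := ⟨fun x h => h.1 rfl⟩

/-- A vertex of the Brown graph is quadric if its representatives are self-orthogonal. -/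
def IsQuadric {F : Type*} [Field F] (x : Projectivization F (Fin 3 → F)) : Prop :=
  ∑ i, x.rep i * x.rep i = 0


namespace BrownAux
open Projectivization Module

variable {F : Type*} [Field F]

/-- The standard bilinear form on `F³`. -/
def bil (v w : Fin 3 → F) : F := ∑ i, v i * w i

lemma bil_comm (v w : Fin 3 → F) : bil v w = bil w v :=
  Finset.sum_congr rfl fun i _ => mul_comm _ _

/-- `w ↦ bil w v` as a linear map. -/
def fl (v : Fin 3 → F) : (Fin 3 → F) →ₗ[F] F where
  toFun w := bil w v
  map_add' x y := by simp [bil, add_mul, Finset.sum_add_distrib]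
  map_smul' c x := by simp [bil, Finset.mul_sum, mul_assoc]

@[simp] lemma fl_apply (v w : Fin 3 → F) : fl v w = bil w v := rfl

lemma bil_single (i : Fin 3) (v : Fin 3 → F) : bil (Pi.single i 1) v = v i := by
  simp [bil, Pi.single_apply, ite_mul]

lemma bil_nondeg {v : Fin 3 → F} (h : ∀ w, bil w v = 0) : v = 0 := by
  funext i
  simpa [bil_single] using h (Pi.single i 1)

lemma fl_ne_zero {v : Fin 3 → F} (hv : v ≠ 0) : fl v ≠ 0 := by
  intro h
  exact hv (bil_nondeg fun w => by simpa using congrArg (fun g => g w) h)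

lemma bil_smul_left (c : F) (v w : Fin 3 → F) : bil (c • v) w = c * bil v w := by
  simp [bil, Finset.mul_sum, mul_assoc]

lemma bil_smul_right (c : F) (v w : Fin 3 → F) : bil v (c • w) = c * bil v w := by
  rw [bil_comm, bil_smul_left, bil_comm]

lemma finrank_ker_fl {v : Fin 3 → F} (hv : v ≠ 0) :
    finrank F (LinearMap.ker (fl v)) = 2 := by
  have h := LinearMap.finrank_range_add_finrank_ker (fl v)
  rw [Module.finrank_fin_fun] at h
  have hsurj : LinearMap.range (fl v) = ⊤ := by
    obtain ⟨x, hx⟩ : ∃ x, fl v x ≠ 0 := by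
      by_contra h'
      push_neg at h'
      exact fl_ne_zero hv (LinearMap.ext h')
    rw [LinearMap.range_eq_top]
    intro c
    have hx' : bil x v ≠ 0 := hx
    exact ⟨(c / bil x v) • x, by simp [fl_apply, bil_smul_left]; field_simp⟩
  rw [hsurj, finrank_top, finrank_self] at h
  omega

lemma prop_of_ker_le {v v' : Fin 3 → F} (hv : v ≠ 0)
    (h : LinearMap.ker (fl v) ≤ LinearMap.ker (fl v')) : ∃ c : F, v' = c • v := by
  obtain ⟨x, hx⟩ : ∃ x, fl v x ≠ 0 := by
    by_contra h'
    push_neg at h'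
    exact fl_ne_zero hv (LinearMap.ext h')
  refine ⟨bil x v' / bil x v, ?_⟩
  have key : ∀ w, bil w v' = (bil x v' / bil x v) * bil w v := by
    intro w
    have hxv : bil x v ≠ 0 := hx
    have hmem : w - (bil w v / bil x v) • x ∈ LinearMap.ker (fl v) := by
      simp only [LinearMap.mem_ker, map_sub, map_smul, fl_apply, smul_eq_mul]
      field_simp
      ring
    have h2 := h hmem
    simp only [LinearMap.mem_ker, map_sub, map_smul, fl_apply, smul_eq_mul,
      sub_eq_zero] at h2
    rw [h2]
    field_simp
  have : ∀ w, bil w (v' - (bil x v' / bil x v) • v) = 0 := by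
    intro w
    have h1 : bil w (v' - (bil x v' / bil x v) • v)
        = bil w v' - (bil x v' / bil x v) * bil w v := by
      rw [bil_comm, bil_comm w v', bil_comm w v]
      simp [bil, sub_mul, Finset.sum_sub_distrib, Pi.sub_apply, bil_smul_left,
        Finset.mul_sum, mul_assoc]
    rw [h1, key w, sub_self]
  have := bil_nondeg this
  rw [sub_eq_zero] at this
  exact this


abbrev PP (F : Type*) [Field F] := Projectivization F (Fin 3 → F)

/-- orthogonality of projective points -/
def Perp (x y : PP F) : Prop := bil x.rep y.rep = 0

lemma perp_symm {x y : PP F} (h : Perp x y) : Perp y x := by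
  rwa [Perp, bil_comm]

lemma perp_mk {v w : Fin 3 → F} (hv : v ≠ 0) (hw : w ≠ 0) :
    Perp (mk F v hv) (mk F w hw) ↔ bil v w = 0 := by
  obtain ⟨a, ha⟩ := exists_smul_eq_mk_rep F v hv
  obtain ⟨b, hb⟩ := exists_smul_eq_mk_rep F w hw
  rw [Perp, ← ha, ← hb, Units.smul_def, Units.smul_def, bil_smul_left, bil_smul_right]
  simp [mul_eq_zero, a.ne_zero, b.ne_zero]

/-- the dual point: reps differing by scalars give equal kernels -/
lemma ker_fl_rep (x : PP F) {v : Fin 3 → F} (hv : v ≠ 0) (hx : mk F v hv = x) :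
    LinearMap.ker (fl x.rep) = LinearMap.ker (fl v) := by
  obtain ⟨a, ha⟩ := exists_smul_eq_mk_rep F v hv
  rw [hx] at ha
  ext w
  simp only [LinearMap.mem_ker, fl_apply, ← ha, Units.smul_def, bil_smul_right]
  simp [mul_eq_zero, a.ne_zero]

lemma mem_ker_iff_perp (x y : PP F) :
    y.rep ∈ LinearMap.ker (fl x.rep) ↔ Perp x y := by
  simp only [LinearMap.mem_ker, fl_apply, Perp]
  exact ⟨fun h => by rwa [bil_comm], fun h => by rwa [bil_comm]⟩

lemma perp_unique {a b z z' : PP F} (hab : a ≠ b)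
    (hza : Perp z a) (hzb : Perp z b) (hz'a : Perp z' a) (hz'b : Perp z' b) :
    z = z' := by
  have hfin : finrank F ↥(LinearMap.ker (fl a.rep) ⊓ LinearMap.ker (fl b.rep)) = 1 := by
    have h2a := finrank_ker_fl (F := F) a.rep_nonzero
    have h2b := finrank_ker_fl (F := F) b.rep_nonzero
    have hlt : LinearMap.ker (fl a.rep) < LinearMap.ker (fl a.rep) ⊔ LinearMap.ker (fl b.rep) := by
      rcases lt_or_eq_of_le (le_sup_left (a := LinearMap.ker (fl a.rep))
          (b := LinearMap.ker (fl b.rep))) with h | h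
      · exact h
      · exfalso
        have hle : LinearMap.ker (fl b.rep) ≤ LinearMap.ker (fl a.rep) := by
          rw [h]; exact le_sup_right
        obtain ⟨c, hc⟩ := prop_of_ker_le b.rep_nonzero hle
        have hc0 : c ≠ 0 := by
          rintro rfl
          exact a.rep_nonzero (by simpa using hc)
        apply hab
        conv_lhs => rw [← a.mk_rep]
        conv_rhs => rw [← b.mk_rep]
        rw [mk_eq_mk_iff]
        exact ⟨Units.mk0 c hc0, by simp [Units.smul_def, hc.symm]⟩
    have hsup3 : finrank F ↥(LinearMap.ker (fl a.rep) ⊔ LinearMap.ker (fl b.rep)) = 3 := by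
      have h1 := Submodule.finrank_lt_finrank_of_lt hlt
      have h2 := Submodule.finrank_le (LinearMap.ker (fl a.rep) ⊔ LinearMap.ker (fl b.rep))
      rw [Module.finrank_fin_fun] at h2
      omega
    have := Submodule.finrank_sup_add_finrank_inf_eq
      (LinearMap.ker (fl a.rep)) (LinearMap.ker (fl b.rep))
    rw [hsup3, h2a, h2b] at this
    omega
  have hzK : z.rep ∈ LinearMap.ker (fl a.rep) ⊓ LinearMap.ker (fl b.rep) := by
    rw [Submodule.mem_inf, mem_ker_iff_perp, mem_ker_iff_perp]
    exact ⟨perp_symm hza, perp_symm hzb⟩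
  have hz'K : z'.rep ∈ LinearMap.ker (fl a.rep) ⊓ LinearMap.ker (fl b.rep) := by
    rw [Submodule.mem_inf, mem_ker_iff_perp, mem_ker_iff_perp]
    exact ⟨perp_symm hz'a, perp_symm hz'b⟩
  have hspan : Submodule.span F {z.rep} = LinearMap.ker (fl a.rep) ⊓ LinearMap.ker (fl b.rep) := by
    apply Submodule.eq_of_le_of_finrank_le
    · rw [Submodule.span_le, Set.singleton_subset_iff]; exact hzK
    · rw [hfin, finrank_span_singleton z.rep_nonzero]
  obtain ⟨c, hc⟩ := Submodule.mem_span_singleton.mp (hspan ▸ hz'K)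
  have hc0 : c ≠ 0 := by
    rintro rfl
    exact z'.rep_nonzero (by simpa using hc.symm)
  conv_lhs => rw [← z.mk_rep]
  conv_rhs => rw [← z'.mk_rep]
  rw [mk_eq_mk_iff]
  exact ⟨(Units.mk0 c hc0)⁻¹, by
    simp only [Units.smul_def, Units.val_inv_eq_inv_val, Units.val_mk0, ← hc, smul_smul,
      inv_mul_cancel₀ hc0, one_smul]⟩


variable [Fintype F]

lemma perp_exists [Fintype F] (a b : PP F) : ∃ z : PP F, Perp z a ∧ Perp z b := by
  classical
  obtain ⟨w₁, w₂, hne, heq⟩ := Fintype.exists_ne_map_eq_of_card_lt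
    (fun w : Fin 3 → F => (fl a.rep w, fl b.rep w)) (by
      simp only [Fintype.card_prod, Fintype.card_fun, Fintype.card_fin]
      have h2 : 2 ≤ Fintype.card F := Fintype.one_lt_card
      calc Fintype.card F * Fintype.card F = Fintype.card F ^ 2 := by ring
      _ < Fintype.card F ^ 3 := Nat.pow_lt_pow_right Fintype.one_lt_card (by omega))
  have hw : w₁ - w₂ ≠ 0 := sub_ne_zero.mpr hne
  have h1 : fl a.rep (w₁ - w₂) = 0 := by
    rw [map_sub, sub_eq_zero]; exact congrArg Prod.fst heq
  have h2 : fl b.rep (w₁ - w₂) = 0 := by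
    rw [map_sub, sub_eq_zero]; exact congrArg Prod.snd heq
  refine ⟨mk F (w₁ - w₂) hw, ?_, ?_⟩
  · rw [show a = mk F a.rep a.rep_nonzero from a.mk_rep.symm, perp_mk]
    rw [fl_apply] at h1
    exact h1
  · rw [show b = mk F b.rep b.rep_nonzero from b.mk_rep.symm, perp_mk]
    rw [fl_apply] at h2
    exact h2


instance : Finite (PP F) := Quotient.finite _
noncomputable instance : Fintype (PP F) := Fintype.ofFinite _

open scoped Classical in
/-- the polar line of `x` as a finset -/
noncomputable def line (x : PP F) : Finset (PP F) :=
  Finset.univ.filter (fun y => Perp x y)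

lemma mem_line {x y : PP F} : y ∈ line x ↔ Perp x y := by
  classical simp [line]


lemma line_card (x : PP F) : (line x).card = Fintype.card F + 1 := by
  classical
  set q := Fintype.card F with hq
  have hq2 : 2 ≤ q := Fintype.one_lt_card
  -- the affine cone over (line x), minus zero
  set Kset : Finset (Fin 3 → F) :=
    Finset.univ.filter (fun w => fl x.rep w = 0 ∧ w ≠ 0) with hKset
  -- card of Kset is q^2 - 1
  have hK1 : Kset.card + 1 = q ^ 2 := by
    have hcard : Fintype.card (LinearMap.ker (fl x.rep)) = q ^ 2 := by
      rw [card_eq_pow_finrank (K := F), finrank_ker_fl x.rep_nonzero]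
    have e1 : (Finset.univ.filter (fun w : Fin 3 → F => fl x.rep w = 0)).card = q ^ 2 := by
      rw [← Fintype.card_subtype, ← hcard]
      exact Fintype.card_congr (Equiv.subtypeEquivRight (fun w => (LinearMap.mem_ker).symm))
    have e2 : Kset = (Finset.univ.filter (fun w : Fin 3 → F => fl x.rep w = 0)).erase 0 := by
      ext w
      simp only [hKset, Finset.mem_erase, Finset.mem_filter, Finset.mem_univ, true_and]
      tauto
    have h0 : (0 : Fin 3 → F) ∈ Finset.univ.filter (fun w : Fin 3 → F => fl x.rep w = 0) := by
      exact Finset.mem_filter.mpr ⟨Finset.mem_univ _, (fl (x.rep)).map_zero⟩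
    rw [e2, Finset.card_erase_of_mem h0, e1]
    have : 1 ≤ q ^ 2 := Nat.one_le_pow _ _ (by omega)
    omega
  -- the projection to the line
  set φ : (Fin 3 → F) → PP F := fun w => if h : w = 0 then x else mk F w h with hφ
  have hmaps : ∀ w ∈ Kset, φ w ∈ line x := by
    intro w hw
    simp only [hKset, Finset.mem_filter, Finset.mem_univ, true_and] at hw
    obtain ⟨hker, hw0⟩ := hw
    rw [hφ]
    simp only [dif_neg hw0]
    rw [mem_line, show x = mk F x.rep x.rep_nonzero from x.mk_rep.symm, perp_mk]
    rw [fl_apply] at hker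
    rwa [bil_comm]
  have hfiber : ∀ y ∈ line x, (Kset.filter (fun w => φ w = y)).card = q - 1 := by
    intro y hy
    have himg : Kset.filter (fun w => φ w = y)
        = (Finset.univ.erase (0:F)).image (fun c => c • y.rep) := by
      ext w
      simp only [Finset.mem_filter, Finset.mem_image, Finset.mem_erase, Finset.mem_univ,
        true_and, and_true, hKset]
      constructor
      · rintro ⟨⟨hker, hw0⟩, hwy⟩
        rw [hφ] at hwy
        simp only [dif_neg hw0] at hwy
        rw [← y.mk_rep, mk_eq_mk_iff] at hwy
        obtain ⟨a, ha⟩ := hwy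
        exact ⟨a, a.ne_zero, ha⟩
      · rintro ⟨c, hc0, rfl⟩
        have hw0 : c • y.rep ≠ 0 := smul_ne_zero hc0 y.rep_nonzero
        have hperp : bil y.rep x.rep = 0 := bil_comm x.rep y.rep ▸ (mem_line.mp hy)
        refine ⟨⟨?_, hw0⟩, ?_⟩
        · rw [fl_apply, bil_smul_left, hperp, mul_zero]
        · rw [hφ]
          simp only [dif_neg hw0]
          exact ((mk_eq_mk_iff F _ _ hw0 y.rep_nonzero).mpr
            ⟨Units.mk0 c hc0, by simp [Units.smul_def]⟩).trans y.mk_rep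
    rw [himg, Finset.card_image_of_injective _ ?_, Finset.card_erase_of_mem (Finset.mem_univ _),
      Finset.card_univ]
    intro c c' h
    have h2 : c • y.rep = c' • y.rep := h
    have : (c - c') • y.rep = 0 := by rw [sub_smul, h2, sub_self]
    rcases smul_eq_zero.mp this with h' | h'
    · exact sub_eq_zero.mp h'
    · exact absurd h' y.rep_nonzero
  have hsum : Kset.card = (line x).card * (q - 1) := by
    rw [Finset.card_eq_sum_card_fiberwise hmaps, Finset.sum_congr rfl hfiber,
      Finset.sum_const, smul_eq_mul]
  obtain ⟨r, hr⟩ : ∃ r, q = r + 2 := ⟨q - 2, by omega⟩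
  rw [hsum, hr] at hK1
  have er : r + 2 - 1 = r + 1 := by omega
  rw [er] at hK1
  have e3 : (r + 2) ^ 2 = (r + 3) * (r + 1) + 1 := by ring
  rw [e3] at hK1
  have : (line x).card * (r + 1) = (r + 3) * (r + 1) := by omega
  have := Nat.eq_of_mul_eq_mul_right (by omega : 0 < r + 1) this
  omega


lemma card_PP : Fintype.card F < Fintype.card (PP F) := by
  have h1 : (Pi.single 0 1 : Fin 3 → F) ≠ 0 := by
    intro h
    have := congrFun h 0
    simp at this
  have := Finset.card_le_univ (line (mk F _ h1))
  rw [line_card] at this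
  omega

theorem main (S : Set (PP F)) (hS : S.ncard < Fintype.card F) :
    ((brown F).induce Sᶜ).Connected := by
  classical
  set q := Fintype.card F with hq
  have hq2 : 2 ≤ q := Fintype.one_lt_card
  set S' : Finset (PP F) := S.toFinset with hS'
  have hs : S'.card < q := by rwa [hS', ← Set.ncard_eq_toFinset_card']
  rw [SimpleGraph.connected_iff]
  have hne : Nonempty ↑Sᶜ := by
    by_contra hne
    rw [not_nonempty_iff] at hne
    have hSuniv : S = Set.univ := by
      ext a
      simp only [Set.mem_univ, iff_true]
      by_contra ha
      exact hne.false ⟨a, ha⟩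
    rw [hSuniv, Set.ncard_univ, Nat.card_eq_fintype_card] at hS
    have := card_PP (F := F)
    omega
  refine ⟨?_, hne⟩
  intro u v
  by_contra hreach
  set G' := (brown F).induce Sᶜ with hG'
  set A : Finset (PP F) :=
    Finset.univ.filter (fun a => ∃ h : a ∈ Sᶜ, G'.Reachable u ⟨a, h⟩) with hA
  set B : Finset (PP F) :=
    Finset.univ.filter (fun b => b ∈ Sᶜ ∧ b ∉ A) with hB
  have memA : ∀ {a : PP F}, a ∈ A ↔ ∃ h : a ∈ Sᶜ, G'.Reachable u ⟨a, h⟩ := by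
    intro a; simp [hA]
  have memB : ∀ {b : PP F}, b ∈ B ↔ b ∈ Sᶜ ∧ b ∉ A := by
    intro b; simp [hB]
  have hAS : ∀ {a : PP F}, a ∈ A → a ∉ S' := by
    intro a ha
    obtain ⟨h, -⟩ := memA.mp ha
    simpa [hS', Set.mem_toFinset] using h
  have hBS : ∀ {b : PP F}, b ∈ B → b ∉ S' := by
    intro b hb
    have := (memB.mp hb).1
    simpa [hS', Set.mem_toFinset] using this
  have hABdisj : Disjoint A B := by
    rw [Finset.disjoint_left]
    intro a ha hb
    exact (memB.mp hb).2 ha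
  have huA : u.1 ∈ A := memA.mpr ⟨u.2, by rw [Subtype.coe_eta]⟩
  have hvB : v.1 ∈ B := by
    refine memB.mpr ⟨v.2, fun hv => ?_⟩
    obtain ⟨h, hr⟩ := memA.mp hv
    exact hreach (by rwa [Subtype.coe_eta] at hr)
  -- closure of A under adjacency within Sᶜ
  have key : ∀ {a c : PP F}, a ∈ A → c ∈ Sᶜ → Perp a c → a ≠ c → c ∈ A := by
    intro a c ha hc hperp hac
    obtain ⟨h, hr⟩ := memA.mp ha
    refine memA.mpr ⟨hc, hr.trans (SimpleGraph.Adj.reachable ?_)⟩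
    show (brown F).Adj a c
    exact (⟨hac, hperp⟩ : a ≠ c ∧ ∑ i, a.rep i * c.rep i = 0)
  -- every common perp of a ∈ A, b ∈ B is in S'
  have hcross : ∀ {a b z : PP F}, a ∈ A → b ∈ B → Perp z a → Perp z b → z ∈ S' := by
    intro a b z ha hb hza hzb
    by_contra hzS
    have hzc : z ∈ Sᶜ := by
      simp only [Set.mem_compl_iff]
      intro h
      exact hzS (by simpa [hS', Set.mem_toFinset] using h)
    have hab : a ≠ b := fun h => (memB.mp hb).2 (h ▸ ha)
    have hbA : b ∈ A := by
      by_cases hza' : z = a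
      · exact key ha (memB.mp hb).1 (hza' ▸ hzb) hab
      · by_cases hzb' : z = b
        · exact key ha (memB.mp hb).1 (perp_symm (hzb' ▸ hza)) hab
        · have hzA : z ∈ A := key ha hzc (perp_symm hza) (fun h => hza' h.symm)
          exact key hzA (memB.mp hb).1 hzb hzb'
    exact (memB.mp hb).2 hbA
  set d : PP F → ℕ := fun a => (line a ∩ S').card with hd
  have hdle : ∀ a : PP F, d a ≤ S'.card :=
    fun a => Finset.card_le_card Finset.inter_subset_right
  have deq : ∀ a : PP F, (line a \ S').card + d a = q + 1 := by
    intro a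
    rw [hd, Finset.card_sdiff_add_card_inter, line_card]
  -- B.card ≤ d a * q for a ∈ A (and symmetrically)
  have hBbound : ∀ {a : PP F}, a ∈ A → B.card ≤ d a * q := by
    intro a ha
    have hsub : B ⊆ (line a ∩ S').biUnion (fun z => (line z).erase a) := by
      intro b hb
      obtain ⟨z, hza, hzb⟩ := perp_exists a b
      have hzS : z ∈ S' := hcross ha hb hza hzb
      rw [Finset.mem_biUnion]
      refine ⟨z, Finset.mem_inter.mpr ⟨mem_line.mpr (perp_symm hza), hzS⟩, ?_⟩
      rw [Finset.mem_erase]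
      exact ⟨fun h => hABdisj.forall_ne_finset ha hb h.symm, mem_line.mpr hzb⟩
    calc B.card ≤ ((line a ∩ S').biUnion (fun z => (line z).erase a)).card :=
          Finset.card_le_card hsub
      _ ≤ ∑ z ∈ line a ∩ S', ((line z).erase a).card := Finset.card_biUnion_le
      _ = ∑ z ∈ line a ∩ S', q := by
          refine Finset.sum_congr rfl fun z hz => ?_
          rw [Finset.card_erase_of_mem
            (mem_line.mpr (perp_symm (mem_line.mp (Finset.mem_inter.mp hz).1))), line_card]
          omega
      _ = d a * q := by rw [Finset.sum_const, smul_eq_mul]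
  have hAbound : ∀ {b : PP F}, b ∈ B → A.card ≤ d b * q := by
    intro b hb
    have hsub : A ⊆ (line b ∩ S').biUnion (fun z => (line z).erase b) := by
      intro a ha
      obtain ⟨z, hza, hzb⟩ := perp_exists a b
      have hzS : z ∈ S' := hcross ha hb hza hzb
      rw [Finset.mem_biUnion]
      refine ⟨z, Finset.mem_inter.mpr ⟨mem_line.mpr (perp_symm hzb), hzS⟩, ?_⟩
      rw [Finset.mem_erase]
      exact ⟨fun h => hABdisj.forall_ne_finset ha hb h, mem_line.mpr hza⟩
    calc A.card ≤ ((line b ∩ S').biUnion (fun z => (line z).erase b)).card :=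
          Finset.card_le_card hsub
      _ ≤ ∑ z ∈ line b ∩ S', ((line z).erase b).card := Finset.card_biUnion_le
      _ = ∑ z ∈ line b ∩ S', q := by
          refine Finset.sum_congr rfl fun z hz => ?_
          rw [Finset.card_erase_of_mem
            (mem_line.mpr (perp_symm (mem_line.mp (Finset.mem_inter.mp hz).1))), line_card]
          omega
      _ = d b * q := by rw [Finset.sum_const, smul_eq_mul]
  -- lower bound via the pencil of lines through a
  have hlower : ∀ {a : PP F}, a ∈ A → (line a \ S').card * q ≤ A.card + S'.card := by
    intro a ha
    set T := (line a \ S').biUnion (fun z => (line z).erase a) with hT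
    have hdisj : ∀ z ∈ line a \ S', ∀ z' ∈ line a \ S', z ≠ z' →
        Disjoint ((line z).erase a) ((line z').erase a) := by
      intro z hz z' hz' hzz'
      rw [Finset.disjoint_left]
      intro c hc hc'
      rw [Finset.mem_erase] at hc hc'
      apply hzz'
      exact perp_unique (Ne.symm hc.1)
        (perp_symm (mem_line.mp (Finset.mem_sdiff.mp hz).1)) (mem_line.mp hc.2)
        (perp_symm (mem_line.mp (Finset.mem_sdiff.mp hz').1)) (mem_line.mp hc'.2)
    have hTcard : T.card = (line a \ S').card * q := by
      rw [hT, Finset.card_biUnion hdisj]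
      calc ∑ z ∈ line a \ S', ((line z).erase a).card
          = ∑ _z ∈ line a \ S', q := by
            refine Finset.sum_congr rfl fun z hz => ?_
            rw [Finset.card_erase_of_mem
              (mem_line.mpr (perp_symm (mem_line.mp (Finset.mem_sdiff.mp hz).1))), line_card]
            omega
        _ = (line a \ S').card * q := by rw [Finset.sum_const, smul_eq_mul]
    have hTsub : T ⊆ A ∪ S' := by
      intro c hc
      rw [hT, Finset.mem_biUnion] at hc
      obtain ⟨z, hz, hcz⟩ := hc
      rw [Finset.mem_erase] at hcz
      obtain ⟨hca, hcz⟩ := hcz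
      rw [Finset.mem_sdiff] at hz
      obtain ⟨hzla, hzS⟩ := hz
      rw [Finset.mem_union]
      by_cases hcS : c ∈ S'
      · exact Or.inr hcS
      · left
        have hcc : c ∈ Sᶜ := by
          simp only [Set.mem_compl_iff]
          intro h
          exact hcS (by simpa [hS', Set.mem_toFinset] using h)
        by_cases hza' : z = a
        · exact key ha hcc (hza' ▸ mem_line.mp hcz) (Ne.symm hca)
        · by_cases hzc' : z = c
          · exact key ha hcc (hzc' ▸ mem_line.mp hzla) (Ne.symm hca)
          · have hzc : z ∈ Sᶜ := by
              simp only [Set.mem_compl_iff]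
              intro h
              exact hzS (by simpa [hS', Set.mem_toFinset] using h)
            have hzA : z ∈ A := key ha hzc (mem_line.mp hzla) (fun h => hza' h.symm)
            exact key hzA hcc (mem_line.mp hcz) hzc'
    calc (line a \ S').card * q = T.card := hTcard.symm
      _ ≤ (A ∪ S').card := Finset.card_le_card hTsub
      _ ≤ A.card + S'.card := Finset.card_union_le _ _
  have hlowerB : ∀ {b : PP F}, b ∈ B → (line b \ S').card * q ≤ B.card + S'.card := by
    intro b hb
    set T := (line b \ S').biUnion (fun z => (line z).erase b) with hT
    have hdisj : ∀ z ∈ line b \ S', ∀ z' ∈ line b \ S', z ≠ z' →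
        Disjoint ((line z).erase b) ((line z').erase b) := by
      intro z hz z' hz' hzz'
      rw [Finset.disjoint_left]
      intro c hc hc'
      rw [Finset.mem_erase] at hc hc'
      apply hzz'
      exact perp_unique (Ne.symm hc.1)
        (perp_symm (mem_line.mp (Finset.mem_sdiff.mp hz).1)) (mem_line.mp hc.2)
        (perp_symm (mem_line.mp (Finset.mem_sdiff.mp hz').1)) (mem_line.mp hc'.2)
    have hTcard : T.card = (line b \ S').card * q := by
      rw [hT, Finset.card_biUnion hdisj]
      calc ∑ z ∈ line b \ S', ((line z).erase b).card
          = ∑ _z ∈ line b \ S', q := by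
            refine Finset.sum_congr rfl fun z hz => ?_
            rw [Finset.card_erase_of_mem
              (mem_line.mpr (perp_symm (mem_line.mp (Finset.mem_sdiff.mp hz).1))), line_card]
            omega
        _ = (line b \ S').card * q := by rw [Finset.sum_const, smul_eq_mul]
    have hTsub : T ⊆ B ∪ S' := by
      intro c hc
      rw [hT, Finset.mem_biUnion] at hc
      obtain ⟨z, hz, hcz⟩ := hc
      rw [Finset.mem_erase] at hcz
      obtain ⟨hcb, hcz⟩ := hcz
      rw [Finset.mem_sdiff] at hz
      obtain ⟨hzlb, hzS⟩ := hz
      rw [Finset.mem_union]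
      by_cases hcS : c ∈ S'
      · exact Or.inr hcS
      · left
        have hcc : c ∈ Sᶜ := by
          simp only [Set.mem_compl_iff]
          intro h
          exact hcS (by simpa [hS', Set.mem_toFinset] using h)
        -- c ∈ B: if c ∈ A then z would be a common perp of c ∈ A and b ∈ B, forcing z ∈ S'
        refine memB.mpr ⟨hcc, fun hcA => ?_⟩
        have hcb' : c ≠ b := by
          intro h
          exact (memB.mp hb).2 (h ▸ hcA)
        by_cases hzb' : z = b
        · have hPerp : Perp c b := perp_symm (hzb' ▸ mem_line.mp hcz)
          have : b ∈ A := key hcA (memB.mp hb).1 hPerp hcb'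
          exact (memB.mp hb).2 this
        · by_cases hzc' : z = c
          · have hbz : Perp b z := mem_line.mp hzlb
            have hPerp : Perp c b := perp_symm (hzc' ▸ hbz)
            have : b ∈ A := key hcA (memB.mp hb).1 hPerp hcb'
            exact (memB.mp hb).2 this
          · have hzS' : z ∈ S' := hcross hcA hb (mem_line.mp hcz) (perp_symm (mem_line.mp hzlb))
            exact hzS hzS'
    calc (line b \ S').card * q = T.card := hTcard.symm
      _ ≤ (B ∪ S').card := Finset.card_le_card hTsub
      _ ≤ B.card + S'.card := Finset.card_union_le _ _
  -- minimum degree-into-S vertices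
  have hAne : A.Nonempty := ⟨u.1, huA⟩
  have hBne : B.Nonempty := ⟨v.1, hvB⟩
  obtain ⟨a₀, ha₀, ha₀min⟩ := Finset.exists_min_image A d hAne
  obtain ⟨b₀, hb₀, hb₀min⟩ := Finset.exists_min_image B d hBne
  -- pair inequality : q + 1 ≤ d a₀ + d b₀
  have hD : q + 1 ≤ d a₀ + d b₀ := by
    have h1 : (line a₀ \ S').card * q ≤ d b₀ * q + S'.card :=
      le_trans (hlower ha₀) (by have := hAbound hb₀; omega)
    have h2 : (line b₀ \ S').card * q ≤ d a₀ * q + S'.card :=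
      le_trans (hlowerB hb₀) (by have := hBbound ha₀; omega)
    have e1 := deq a₀
    have e2 := deq b₀
    by_contra hcon
    push_neg at hcon
    have hE : q + 2 ≤ (line a₀ \ S').card + (line b₀ \ S').card := by omega
    have h3 : (q + 2) * q ≤ ((line a₀ \ S').card + (line b₀ \ S').card) * q :=
      Nat.mul_le_mul_right _ hE
    have h4 : (d a₀ + d b₀) * q ≤ q * q := Nat.mul_le_mul_right _ (by omega)
    rw [add_mul] at h3 h4
    nlinarith [hs]
  -- A and B both have at least q+1 elements
  have hAcard : q + 1 ≤ A.card := by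
    have h1 := hlower ha₀
    have e1 := deq a₀
    have h2 : 2 ≤ (line a₀ \ S').card := by
      have := hdle a₀
      omega
    have h3 : 2 * q ≤ (line a₀ \ S').card * q := Nat.mul_le_mul_right _ h2
    omega
  have hBcard : q + 1 ≤ B.card := by
    have h1 := hlowerB hb₀
    have e1 := deq b₀
    have h2 : 2 ≤ (line b₀ \ S').card := by
      have := hdle b₀
      omega
    have h3 : 2 * q ≤ (line b₀ \ S').card * q := Nat.mul_le_mul_right _ h2
    omega
  -- double counting of incidences
  have hswapA : ∑ z ∈ S', (line z ∩ A).card = ∑ a ∈ A, d a := by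
    have h1 : ∀ z : PP F, ∀ W : Finset (PP F),
        (line z ∩ W).card = ∑ w ∈ W, if Perp z w then 1 else 0 := by
      intro z W
      have e : line z ∩ W = W.filter (fun w => Perp z w) := by
        ext w
        simp only [Finset.mem_inter, mem_line, Finset.mem_filter]
        tauto
      rw [e, Finset.card_filter]
    have h2 : ∀ a : PP F, d a = ∑ z ∈ S', if Perp z a then 1 else 0 := by
      intro a
      have e : line a ∩ S' = S'.filter (fun z => Perp z a) := by
        ext z
        simp only [Finset.mem_inter, mem_line, Finset.mem_filter]
        constructor
        · rintro ⟨h1', h2'⟩; exact ⟨h2', perp_symm h1'⟩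
        · rintro ⟨h1', h2'⟩; exact ⟨perp_symm h2', h1'⟩
      show (line a ∩ S').card = _
      rw [e, Finset.card_filter]
    simp_rw [h1, h2]
    rw [Finset.sum_comm]
  have hswapB : ∑ z ∈ S', (line z ∩ B).card = ∑ b ∈ B, d b := by
    have h1 : ∀ z : PP F, ∀ W : Finset (PP F),
        (line z ∩ W).card = ∑ w ∈ W, if Perp z w then 1 else 0 := by
      intro z W
      have e : line z ∩ W = W.filter (fun w => Perp z w) := by
        ext w
        simp only [Finset.mem_inter, mem_line, Finset.mem_filter]
        tauto
      rw [e, Finset.card_filter]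
    have h2 : ∀ b : PP F, d b = ∑ z ∈ S', if Perp z b then 1 else 0 := by
      intro b
      have e : line b ∩ S' = S'.filter (fun z => Perp z b) := by
        ext z
        simp only [Finset.mem_inter, mem_line, Finset.mem_filter]
        constructor
        · rintro ⟨h1', h2'⟩; exact ⟨h2', perp_symm h1'⟩
        · rintro ⟨h1', h2'⟩; exact ⟨perp_symm h2', h1'⟩
      show (line b ∩ S').card = _
      rw [e, Finset.card_filter]
    simp_rw [h1, h2]
    rw [Finset.sum_comm]
  have hinc : ∑ a ∈ A, d a + ∑ b ∈ B, d b ≤ S'.card * (q + 1) := by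
    rw [← hswapA, ← hswapB, ← Finset.sum_add_distrib]
    calc ∑ z ∈ S', ((line z ∩ A).card + (line z ∩ B).card)
        ≤ ∑ z ∈ S', (line z).card := by
          refine Finset.sum_le_sum fun z hz => ?_
          rw [← Finset.card_union_of_disjoint
            (hABdisj.mono Finset.inter_subset_right Finset.inter_subset_right)]
          exact Finset.card_le_card (Finset.union_subset
            Finset.inter_subset_left Finset.inter_subset_left)
      _ = S'.card * (q + 1) := by
          rw [Finset.sum_congr rfl fun z _ => line_card z, Finset.sum_const, smul_eq_mul]
  have hsumA : A.card * d a₀ ≤ ∑ a ∈ A, d a := by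
    have := Finset.card_nsmul_le_sum A d (d a₀) ha₀min
    rwa [smul_eq_mul] at this
  have hsumB : B.card * d b₀ ≤ ∑ b ∈ B, d b := by
    have := Finset.card_nsmul_le_sum B d (d b₀) hb₀min
    rwa [smul_eq_mul] at this
  have hfin1 : (q + 1) * (d a₀ + d b₀) ≤ S'.card * (q + 1) := by
    have h1 : (q + 1) * d a₀ ≤ A.card * d a₀ := Nat.mul_le_mul_right _ hAcard
    have h2 : (q + 1) * d b₀ ≤ B.card * d b₀ := Nat.mul_le_mul_right _ hBcard
    calc (q + 1) * (d a₀ + d b₀) = (q + 1) * d a₀ + (q + 1) * d b₀ := by ring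
      _ ≤ A.card * d a₀ + B.card * d b₀ := by omega
      _ ≤ ∑ a ∈ A, d a + ∑ b ∈ B, d b := by omega
      _ ≤ S'.card * (q + 1) := hinc
  have hfin2 : (q + 1) * (q + 1) ≤ (q + 1) * (d a₀ + d b₀) :=
    Nat.mul_le_mul_left _ hD
  have : q + 1 ≤ S'.card := by
    have h := le_trans hfin2 hfin1
    rw [mul_comm (S'.card)] at h
    exact Nat.le_of_mul_le_mul_left h (by omega)
  omega


end BrownAux

theorem brown_vertex_connectivity (F : Type*) [Field F] [Fintype F]
    (hodd : Odd (Fintype.card F)) :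
    Fintype.card F < Nat.card (Projectivization F (Fin 3 → F)) ∧
    ∀ S : Set (Projectivization F (Fin 3 → F)), S.ncard < Fintype.card F →
      ((brown F).induce Sᶜ).Connected := by
  constructor
  · rw [Nat.card_eq_fintype_card]
    exact BrownAux.card_PP
  · intro S hS
    exact BrownAux.main S hS
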